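/- Let R = [[-1/2, √3/2], [-√3/2, -1/2]] and τ = exp(2πi/3). Let A : ℝ² → M₂(ℂ) be measurable with A(R⁻¹x) = R⁻¹ A(x) R for all x ∈ ℝ², and let E ⊆ ℝ² be a measurable set with R⁻¹(E) = E. Let w₁, w₂ : ℝ² → ℂ be differentiable with w₁(R⁻¹x) = τ·w₁(x) and w₂(R⁻¹x) = conj(τ)·w₂(x) for all x ∈ ℝ². For β ∈ ℝ², define G(β) := ∫_E [ -i·conj(w₁(x))·βᵀ(A(x)∇w₂(x)) + i·w₂(x)·βᵀ(A(x)·conj(∇w₁(x))) ] dx, and assume the integrand is integrable on E both for β and for R⁻¹β. Then G(R⁻¹β) = τ·G(β). -/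

import Mathlib

open Complex ComplexConjugate MeasureTheory

/-- The clockwise rotation by `2π/3`: `R = [[-1/2, √3/2],[-√3/2, -1/2]]`. -/
noncomputable def Rm : Matrix (Fin 2) (Fin 2) ℝ :=
  !![-(1/2), Real.sqrt 3 / 2; -(Real.sqrt 3) / 2, -(1/2)]

/-- `R` regarded as a complex matrix. -/
noncomputable def Rc : Matrix (Fin 2) (Fin 2) ℂ := Rm.map Complex.ofReal

/-- `τ = exp(2πi/3)`. -/
noncomputable def τ : ℂ := Complex.exp (2 * Real.pi * Complex.I / 3)

/-- The gradient of a function `w : ℝ² → ℂ`: the vector of its partial derivatives at `x`. -/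
noncomputable def grad (w : (Fin 2 → ℝ) → ℂ) (x : Fin 2 → ℝ) : Fin 2 → ℂ :=
  fun i => fderiv ℝ w x (Pi.single i 1)

/-- The integrand of `G(β)`:
`-i·conj(w₁(x))·βᵀ(A(x)∇w₂(x)) + i·w₂(x)·βᵀ(A(x)·conj(∇w₁(x)))`. -/
noncomputable def Gint (A : (Fin 2 → ℝ) → Matrix (Fin 2) (Fin 2) ℂ)
    (w₁ w₂ : (Fin 2 → ℝ) → ℂ) (β : Fin 2 → ℝ) (x : Fin 2 → ℝ) : ℂ :=
  -Complex.I * conj (w₁ x) * (∑ i : Fin 2, (β i : ℂ) * (A x).mulVec (grad w₂ x) i)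
    + Complex.I * w₂ x * (∑ i : Fin 2, (β i : ℂ) * (A x).mulVec (fun j => conj (grad w₁ x j)) i)

namespace St9

lemma s3 : Real.sqrt 3 * Real.sqrt 3 = 3 := Real.mul_self_sqrt (by norm_num)

lemma s3c : (Real.sqrt 3 : ℂ) * (Real.sqrt 3 : ℂ) = 3 := by
  norm_cast; exact_mod_cast s3

noncomputable def Rm' : Matrix (Fin 2) (Fin 2) ℝ :=
  !![-(1/2), -(Real.sqrt 3)/2; Real.sqrt 3/2, -(1/2)]

lemma Rm'_mul : Rm' * Rm = 1 := by
  ext i j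
  fin_cases i <;> fin_cases j <;>
    simp [Rm, Rm', Matrix.mul_apply, Fin.sum_univ_two] <;> nlinarith [s3]

lemma Rm_mul' : Rm * Rm' = 1 := by
  ext i j
  fin_cases i <;> fin_cases j <;>
    simp [Rm, Rm', Matrix.mul_apply, Fin.sum_univ_two] <;> nlinarith [s3]

lemma Rm_inv : Rm⁻¹ = Rm' := Matrix.inv_eq_left_inv Rm'_mul

noncomputable def Rc' : Matrix (Fin 2) (Fin 2) ℂ := Rm'.map Complex.ofReal

lemma Rc'_mul : Rc' * Rc = 1 := by
  ext i j
  fin_cases i <;> fin_cases j <;>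
    simp [Rc, Rc', Rm, Rm', Matrix.mul_apply, Fin.sum_univ_two] <;>
    push_cast <;>
    first
      | linear_combination (1/4 : ℂ) * s3c
      | linear_combination (-(1/4) : ℂ) * s3c
      | ring

lemma Rc_mul' : Rc * Rc' = 1 := by
  ext i j
  fin_cases i <;> fin_cases j <;>
    simp [Rc, Rc', Rm, Rm', Matrix.mul_apply, Fin.sum_univ_two] <;>
    push_cast <;>
    first
      | linear_combination (1/4 : ℂ) * s3c
      | linear_combination (-(1/4) : ℂ) * s3c
      | ring

lemma Rc_inv : Rc⁻¹ = Rc' := Matrix.inv_eq_left_inv Rc'_mul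

lemma Rc_transpose : Rc.transpose = Rc' := by
  ext i j
  fin_cases i <;> fin_cases j <;> simp [Rc, Rc', Rm, Rm', Matrix.transpose_apply]

lemma cast_mulVec (β : Fin 2 → ℝ) :
    (fun i => ((Rm⁻¹.mulVec β) i : ℂ)) = Rc⁻¹.mulVec (fun i => (β i : ℂ)) := by
  rw [Rm_inv, Rc_inv]
  funext i
  fin_cases i <;>
    simp [Rm', Rc', Matrix.mulVec, dotProduct, Fin.sum_univ_two] <;>
    push_cast <;> ring

lemma conj_mulVec (v : Fin 2 → ℂ) :
    (fun j => conj (Rc⁻¹.mulVec v j)) = Rc⁻¹.mulVec (fun j => conj (v j)) := by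
  rw [Rc_inv]
  funext j
  fin_cases j <;>
    simp [Rc', Rm', Matrix.mulVec, dotProduct, Fin.sum_univ_two, map_add, map_mul,
      Complex.conj_ofReal, map_ofNat] <;> ring

lemma fderiv_eq (w : (Fin 2 → ℝ) → ℂ) (y : Fin 2 → ℝ) (v : Fin 2 → ℝ) :
    fderiv ℝ w y v = v 0 • grad w y 0 + v 1 • grad w y 1 := by
  have hv : v = v 0 • (Pi.single (0 : Fin 2) (1:ℝ) : Fin 2 → ℝ) + v 1 • (Pi.single (1 : Fin 2) (1:ℝ) : Fin 2 → ℝ) := by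
    funext j; fin_cases j <;> simp
  conv_lhs => rw [hv]
  rw [map_add, ContinuousLinearMap.map_smul, ContinuousLinearMap.map_smul]
  rfl

lemma tau_cube : τ * τ * τ = 1 := by
  rw [τ, ← Complex.exp_add, ← Complex.exp_add,
    show 2 * ↑Real.pi * Complex.I / 3 + 2 * ↑Real.pi * Complex.I / 3
        + 2 * ↑Real.pi * Complex.I / 3 = 2 * ↑Real.pi * Complex.I by ring]
  exact Complex.exp_two_pi_mul_I

lemma conj_tau_mul : conj τ * τ = 1 := by
  rw [τ, ← Complex.exp_conj, ← Complex.exp_add,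
    show conj (2 * ↑Real.pi * Complex.I / 3) = -(2 * ↑Real.pi * Complex.I / 3) by
      simp [map_div₀, Complex.conj_I, Complex.conj_ofReal, map_ofNat]; ring]
  simp

lemma conj_tau_sq : conj τ * conj τ = τ := by
  calc conj τ * conj τ = conj τ * conj τ * (τ * τ * τ) := by rw [tau_cube, mul_one]
    _ = (conj τ * τ) * (conj τ * τ) * τ := by ring
    _ = τ := by rw [conj_tau_mul]; ring


lemma grad_rot (w : (Fin 2 → ℝ) → ℂ) (hw : Differentiable ℝ w) (c : ℂ)
    (hc : ∀ x, w (Rm⁻¹.mulVec x) = c * w x) (x : Fin 2 → ℝ) :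
    grad w (Rm⁻¹.mulVec x) = c • Rc⁻¹.mulVec (grad w x) := by
  classical
  set L : (Fin 2 → ℝ) →L[ℝ] (Fin 2 → ℝ) :=
    (Matrix.mulVecLin Rm⁻¹).toContinuousLinearMap with hL
  have hLapp : ∀ y, L y = Rm⁻¹.mulVec y := fun y => rfl
  have hcomp : (fun y => w (L y)) = fun y => c * w y := by
    funext y; rw [hLapp, hc]
  have hkey : ∀ v, fderiv ℝ w (Rm⁻¹.mulVec x) (Rm⁻¹.mulVec v) = c * fderiv ℝ w x v := by
    intro v
    have h1 : fderiv ℝ (fun y => w (L y)) x = (fderiv ℝ w (L x)).comp L := by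
      have := fderiv_comp x (hw (L x)) L.differentiableAt
      rwa [L.fderiv] at this
    have h2 : fderiv ℝ (fun y => c * w y) x = c • fderiv ℝ w x :=
      fderiv_const_mul (hw x) c
    have h3 : (fderiv ℝ w (L x)).comp L = c • fderiv ℝ w x := by
      rw [← h1, hcomp, h2]
    have h4 := congrArg (fun (f : (Fin 2 → ℝ) →L[ℝ] ℂ) => f v) h3
    simpa [hLapp] using h4
  -- componentwise equations
  have E : ∀ i : Fin 2, ((Rm⁻¹ 0 i : ℝ) : ℂ) * grad w (Rm⁻¹.mulVec x) 0
      + ((Rm⁻¹ 1 i : ℝ) : ℂ) * grad w (Rm⁻¹.mulVec x) 1 = c * grad w x i := by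
    intro i
    have h := hkey (Pi.single i 1)
    rw [fderiv_eq] at h
    have hv0 : (Rm⁻¹.mulVec (Pi.single i 1)) 0 = Rm⁻¹ 0 i := by
      simp [Matrix.mulVec, dotProduct, Fin.sum_univ_two, Pi.single_apply]
    have hv1 : (Rm⁻¹.mulVec (Pi.single i 1)) 1 = Rm⁻¹ 1 i := by
      simp [Matrix.mulVec, dotProduct, Fin.sum_univ_two, Pi.single_apply]
    rw [hv0, hv1] at h
    simpa [Complex.real_smul, grad] using h
  have E0 := E 0
  have E1 := E 1
  set u := grad w (Rm⁻¹.mulVec x) with hu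
  rw [Rm_inv] at E0 E1
  simp only [Rm'] at E0 E1
  norm_num at E0 E1
  push_cast at E0 E1
  funext j
  rw [Rc_inv]
  fin_cases j <;>
    simp only [Pi.smul_apply, smul_eq_mul, Rc', Rm', Matrix.mulVec, dotProduct,
      Fin.sum_univ_two, Matrix.map_apply, Matrix.cons_val', Matrix.cons_val_zero,
      Matrix.cons_val_one, Matrix.head_cons, Matrix.empty_val', Matrix.cons_val_fin_one,
      Matrix.head_fin_const] <;> norm_num [Rm'] <;> push_cast
  · linear_combination (-(1/2) : ℂ) * E0 - ((Real.sqrt 3 : ℂ)/2) * E1 - (u 0 / 4) * s3c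
  · linear_combination ((Real.sqrt 3 : ℂ)/2) * E0 - (1/2 : ℂ) * E1 - (u 1 / 4) * s3c

lemma key_dot (b v : Fin 2 → ℂ) (M : Matrix (Fin 2) (Fin 2) ℂ) :
    dotProduct (Rc⁻¹.mulVec b) ((Rc⁻¹ * M * Rc).mulVec (Rc⁻¹.mulVec v))
      = dotProduct b (M.mulVec v) := by
  have hb : Matrix.vecMul (Rc'.mulVec b) Rc' = b := by
    rw [← Rc_transpose, Matrix.vecMul_transpose, Matrix.mulVec_mulVec, Rc_transpose, Rc_mul',
      Matrix.one_mulVec]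
  rw [Rc_inv, Matrix.mulVec_mulVec,
    show Rc' * M * Rc * Rc' = Rc' * M by
      rw [Matrix.mul_assoc (Rc' * M), Rc_mul', Matrix.mul_one],
    Matrix.dotProduct_mulVec, ← Matrix.vecMul_vecMul, hb, ← Matrix.dotProduct_mulVec]

lemma tau_ne : τ ≠ 0 := Complex.exp_ne_zero _

lemma Gpt (A : (Fin 2 → ℝ) → Matrix (Fin 2) (Fin 2) ℂ)
    (hAsym : ∀ x, A (Rm⁻¹.mulVec x) = Rc⁻¹ * A x * Rc)
    (w₁ w₂ : (Fin 2 → ℝ) → ℂ) (hw₁ : Differentiable ℝ w₁) (hw₂ : Differentiable ℝ w₂)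
    (hw₁R : ∀ x, w₁ (Rm⁻¹.mulVec x) = τ * w₁ x)
    (hw₂R : ∀ x, w₂ (Rm⁻¹.mulVec x) = (starRingEnd ℂ) τ * w₂ x)
    (β : Fin 2 → ℝ) (x : Fin 2 → ℝ) :
    Gint A w₁ w₂ (Rm⁻¹.mulVec β) (Rm⁻¹.mulVec x) = τ * Gint A w₁ w₂ β x := by
  have hg₁ := grad_rot w₁ hw₁ τ hw₁R x
  have hg₂ := grad_rot w₂ hw₂ (conj τ) hw₂R x
  have hconj : (fun j => conj (grad w₁ (Rm⁻¹.mulVec x) j))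
      = conj τ • Rc⁻¹.mulVec (fun j => conj (grad w₁ x j)) := by
    rw [hg₁]
    funext j
    simp only [Pi.smul_apply, smul_eq_mul, map_mul]
    rw [congrFun (conj_mulVec (grad w₁ x)) j]
  have hdot : ∀ (b : Fin 2 → ℝ) (M : Matrix (Fin 2) (Fin 2) ℂ) (v : Fin 2 → ℂ),
      (∑ i : Fin 2, (b i : ℂ) * M.mulVec v i)
        = dotProduct (fun i => (b i : ℂ)) (M.mulVec v) := fun _ _ _ => rfl
  unfold Gint
  rw [hdot, hdot, hdot, hdot, hw₁R, hw₂R, hAsym, hconj, hg₂, cast_mulVec β]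
  simp only [Matrix.mulVec_smul, dotProduct_smul, smul_eq_mul, key_dot, map_mul]
  linear_combination (-Complex.I * conj (w₁ x)
      * dotProduct (fun i => ((β i : ℝ) : ℂ)) ((A x).mulVec (grad w₂ x))
    + Complex.I * w₂ x
      * dotProduct (fun i => ((β i : ℝ) : ℂ))
          ((A x).mulVec (fun j => conj (grad w₁ x j)))) * conj_tau_sq

noncomputable instance : Invertible Rm' := ⟨Rm, Rm_mul', Rm'_mul⟩

lemma det_Rm' : Rm'.det = 1 := by
  simp [Rm', Matrix.det_fin_two_of]
  nlinarith [s3]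

lemma measPres : MeasurePreserving (fun x => Rm⁻¹.mulVec x)
    (volume : Measure (Fin 2 → ℝ)) volume := by
  have hfun : (fun x => Rm⁻¹.mulVec x) = ⇑(Matrix.toLin' Rm') := by
    funext y; rw [Rm_inv, Matrix.toLin'_apply]
  rw [hfun]
  refine ⟨(LinearMap.continuous_on_pi _).measurable, ?_⟩
  rw [Real.map_matrix_volume_pi_eq_smul_volume_pi (by rw [det_Rm']; norm_num), det_Rm']
  simp

noncomputable def eqv : (Fin 2 → ℝ) ≃L[ℝ] (Fin 2 → ℝ) :=
  (Matrix.toLinearEquiv' Rm' inferInstance).toContinuousLinearEquiv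

lemma eqv_apply : ⇑eqv = fun x => Rm⁻¹.mulVec x := by
  funext y; rw [Rm_inv]; rfl

lemma emb : MeasurableEmbedding (fun x => Rm⁻¹.mulVec x) := by
  rw [← eqv_apply]
  exact eqv.toHomeomorph.measurableEmbedding

end St9

/-- under rotational invariance of `A` and of `E`, and rotation
eigenvalues `τ`, `conj τ` for `w₁`, `w₂`, one has `G(R⁻¹β) = τ·G(β)`. -/
theorem statement9 (A : (Fin 2 → ℝ) → Matrix (Fin 2) (Fin 2) ℂ)
    (hAmeas : ∀ k l, Measurable fun x => A x k l)
    (hAsym : ∀ x, A (Rm⁻¹.mulVec x) = Rc⁻¹ * A x * Rc)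
    (E : Set (Fin 2 → ℝ)) (hE : MeasurableSet E) (hER : Rm.mulVec ⁻¹' E = E)
    (w₁ w₂ : (Fin 2 → ℝ) → ℂ) (hw₁ : Differentiable ℝ w₁) (hw₂ : Differentiable ℝ w₂)
    (hw₁R : ∀ x, w₁ (Rm⁻¹.mulVec x) = τ * w₁ x)
    (hw₂R : ∀ x, w₂ (Rm⁻¹.mulVec x) = (starRingEnd ℂ) τ * w₂ x)
    (β : Fin 2 → ℝ)
    (hint₁ : IntegrableOn (Gint A w₁ w₂ β) E)
    (hint₂ : IntegrableOn (Gint A w₁ w₂ (Rm⁻¹.mulVec β)) E) :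
    (∫ x in E, Gint A w₁ w₂ (Rm⁻¹.mulVec β) x) = τ * ∫ x in E, Gint A w₁ w₂ β x := by
  have hTpre : (fun x => Rm⁻¹.mulVec x) ⁻¹' E = E := by
    ext y
    simp only [Set.mem_preimage]
    have h1 : Rm.mulVec (Rm⁻¹.mulVec y) ∈ E ↔ Rm⁻¹.mulVec y ∈ E := Set.ext_iff.mp hER _
    rw [← h1, Matrix.mulVec_mulVec, St9.Rm_inv, St9.Rm_mul', Matrix.one_mulVec]
  calc ∫ x in E, Gint A w₁ w₂ (Rm⁻¹.mulVec β) x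
      = ∫ x in (fun x => Rm⁻¹.mulVec x) ⁻¹' E,
          Gint A w₁ w₂ (Rm⁻¹.mulVec β) (Rm⁻¹.mulVec x) := by
        rw [St9.measPres.setIntegral_preimage_emb St9.emb (Gint A w₁ w₂ (Rm⁻¹.mulVec β)) E]
    _ = ∫ x in E, τ * Gint A w₁ w₂ β x := by
        rw [hTpre]
        simp only [St9.Gpt A hAsym w₁ w₂ hw₁ hw₂ hw₁R hw₂R β]
    _ = τ * ∫ x in E, Gint A w₁ w₂ β x := integral_const_mul τ _
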